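/- Let V and W be absolute matrix order unit spaces and let φ, ψ : V → W be completely |·|-preserving maps with φ completely orthogonal to ψ. Then φ + ψ is completely |·|-preserving: (φ+ψ)ₙ(|v|ₙ) = |(φ+ψ)ₙ(v)|ₙ for all v ∈ Mₙ(V), n ∈ ℕ. -/

import Mathlib

noncomputable section

open scoped Matrix.Norms.L2Operator

/-! ### The *-algebra 𝔉 of ∞×∞ complex matrices with finitely many nonzero entries -/

/-- `∞ × ∞` complex matrices (indexed by `ℕ × ℕ`). -/
abbrev FMat := ℕ → ℕ → ℂ

/-- The matrix has (at most) finitely many nonzero entries: it is supported in some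
`n × n` top-left block. -/
def IsFin (a : FMat) : Prop := ∃ n, ∀ i j, (n ≤ i ∨ n ≤ j) → a i j = 0

/-- Matrix multiplication in `𝔉` (the `tsum` is a finite sum for finitely supported
matrices). -/
def fmul (a b : FMat) : FMat := fun i k => ∑' j, a i j * b j k

/-- The involution (conjugate transpose) on `𝔉`. -/
def fstar (a : FMat) : FMat := fun i j => starRingEnd ℂ (a j i)

/-- The matrix unit `𝔢_{i,j}`. -/
def eUnit (i j : ℕ) : FMat := fun k l => if k = i ∧ l = j then 1 else 0

/-- `𝔍ₙ = Σ_{i<n} 𝔢_{i,i}`, the partial identities. -/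
def JMat (n : ℕ) : FMat := fun k l => if k = l ∧ k < n then 1 else 0

/-- `𝔎ₙ = Σ_{i<n} 𝔢_{i,n+i}`, used for `2×2`-block constructions. -/
def KMat (n : ℕ) : FMat := fun k l => if l = k + n ∧ k < n then 1 else 0

/-- The diagonal idempotent `Σ_{i ∈ s} 𝔢_{i,i}` associated to a finite set `s ⊂ ℕ`. -/
def finsetDiag (s : Finset ℕ) : FMat := fun k l => if k = l ∧ k ∈ s then 1 else 0

/-- The operator norm on `𝔉`: the supremum of the (C*-algebra) operator norms of the
finite top-left blocks (for a finitely supported matrix the blocks stabilize). -/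
def fnorm (a : FMat) : ℝ :=
  ⨆ n : ℕ, ‖(Matrix.of fun i j : Fin n => a i j : Matrix (Fin n) (Fin n) ℂ)‖

/-- The order `o(𝔞)` of a finitely supported matrix: the least `n` such that `𝔞` is
supported in the top-left `n × n` block. -/
def matOrd (a : FMat) : ℕ := sInf {n | ∀ i j, (n ≤ i ∨ n ≤ j) → a i j = 0}

/-- A local unitary in `𝔉`: `𝔞*𝔞 = 𝔍_{o(𝔞)} = 𝔞𝔞*`. -/
def IsLocalUnitary (a : FMat) : Prop :=
  IsFin a ∧ fmul (fstar a) a = JMat (matOrd a) ∧ fmul a (fstar a) = JMat (matOrd a)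

/-! ### Non-degenerate *-𝔉-bimodules -/

/-- A non-degenerate `*`-`𝔉`-bimodule structure on a complex vector space `V`:
left and right actions of (finitely supported) infinite matrices together with an
involution, compatible with each other and with the complex scalars, such that every
element is `𝔍ₙ·v·𝔍ₙ` for some `n`. -/
structure FBimod (V : Type*) [AddCommGroup V] [Module ℂ V] where
  lsmul : FMat → V → V
  rsmul : V → FMat → V
  star : V → V
  lsmul_add : ∀ a u v, lsmul a (u + v) = lsmul a u + lsmul a v
  rsmul_add : ∀ u v b, rsmul (u + v) b = rsmul u b + rsmul v b
  add_lsmul : ∀ a b v, IsFin a → IsFin b → lsmul (a + b) v = lsmul a v + lsmul b v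
  rsmul_add' : ∀ v a b, IsFin a → IsFin b → rsmul v (a + b) = rsmul v a + rsmul v b
  smul_lsmul : ∀ (c : ℂ) a v, IsFin a → lsmul (c • a) v = c • lsmul a v
  smul_rsmul : ∀ (c : ℂ) v a, IsFin a → rsmul v (c • a) = c • rsmul v a
  mul_lsmul : ∀ a b v, IsFin a → IsFin b → lsmul (fmul a b) v = lsmul a (lsmul b v)
  rsmul_mul : ∀ v a b, IsFin a → IsFin b → rsmul v (fmul a b) = rsmul (rsmul v a) b
  lsmul_rsmul : ∀ a v b, IsFin a → IsFin b → rsmul (lsmul a v) b = lsmul a (rsmul v b)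
  star_add : ∀ u v, star (u + v) = star u + star v
  star_star : ∀ v, star (star v) = v
  star_lsmul : ∀ a v, IsFin a → star (lsmul a v) = rsmul (star v) (fstar a)
  star_rsmul : ∀ v a, IsFin a → star (rsmul v a) = lsmul (fstar a) (star v)
  smul_compat : ∀ (c : ℂ) (n : ℕ) v, lsmul (JMat n) (rsmul v (JMat n)) = v →
    lsmul (c • JMat n) v = c • v
  nondeg : ∀ v, ∃ n, lsmul (JMat n) (rsmul v (JMat n)) = v

namespace FBimod

variable {V : Type*} [AddCommGroup V] [Module ℂ V] (M : FBimod V)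

/-- `𝔍ₙ 𝔳 𝔍ₙ`. -/
def cut (n : ℕ) (v : V) : V := M.lsmul (JMat n) (M.rsmul v (JMat n))

/-- The order `o(𝔳)`: the smallest `n` with `𝔍ₙ 𝔳 𝔍ₙ = 𝔳`. -/
def ord (v : V) : ℕ := sInf {n | M.cut n v = v}

/-- `𝔞* 𝔳 𝔞`. -/
def conj (a : FMat) (v : V) : V := M.lsmul (fstar a) (M.rsmul v a)

/-- `C` is a bimodule cone: consists of self-adjoint elements, is closed under
addition and under `𝔳 ↦ 𝔞*𝔳𝔞` for `𝔞 ∈ 𝔉`. -/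
def IsCone (C : Set V) : Prop :=
  (∀ v ∈ C, M.star v = v) ∧ (∀ u ∈ C, ∀ v ∈ C, u + v ∈ C) ∧
    (∀ v ∈ C, ∀ a : FMat, IsFin a → M.conj a v ∈ C)

/-- The cone `C` is proper: `C ∩ (−C) = {0}`. -/
def ConeProper (C : Set V) : Prop := ∀ v ∈ C, -v ∈ C → v = 0

/-- The cone `C` is Archimedean. -/
def ConeArch (C : Set V) : Prop :=
  ∀ u ∈ C, ∀ v : V, M.star v = v → (∀ k : ℝ, 0 < k → (k : ℂ) • u + v ∈ C) → v ∈ C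

/-- The cone `C` is generating. -/
def ConeGen (C : Set V) : Prop :=
  ∀ v : V, ∃ v₀ ∈ C, ∃ v₁ ∈ C, ∃ v₂ ∈ C, ∃ v₃ ∈ C,
    v = v₀ + Complex.I • v₁ - v₂ - Complex.I • v₃

/-- `(𝔳₁, 𝔳₂)ₙ⁺ = 𝔳₁ + 𝔎ₙ* 𝔳₂ 𝔎ₙ` (the diagonal `2×2`-block `diag(𝔳₁,𝔳₂)`). -/
def pairPlus (n : ℕ) (v₁ v₂ : V) : V :=
  v₁ + M.lsmul (fstar (KMat n)) (M.rsmul v₂ (KMat n))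

/-- `saₙ(𝔳) = 𝔍ₙ 𝔳 𝔎ₙ + 𝔎ₙ* 𝔳* 𝔍ₙ` (the off-diagonal `2×2`-block of `𝔳`). -/
def san (n : ℕ) (v : V) : V :=
  M.lsmul (JMat n) (M.rsmul v (KMat n)) +
    M.lsmul (fstar (KMat n)) (M.rsmul (M.star v) (JMat n))

/-- `𝔲` and `𝔳` are `𝔉`-independent: compressed onto disjoint diagonal blocks. -/
def FIndep (u v : V) : Prop :=
  ∃ I J : Finset ℕ, Disjoint I J ∧
    M.lsmul (finsetDiag I) (M.rsmul u (finsetDiag I)) = u ∧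
    M.lsmul (finsetDiag J) (M.rsmul v (finsetDiag J)) = v

/-- `(𝔙, C, abs)` is a non-degenerate absolutely ordered `𝔉`-bimodule
(Definition 18 of the paper). -/
structure IsAbsOrd (C : Set V) (abs : V → V) : Prop where
  cone : M.IsCone C
  abs_mem : ∀ v, abs v ∈ C
  ord_abs_le : ∀ v, M.ord (abs v) ≤ M.ord v
  abs_of_mem : ∀ v ∈ C, abs v = v
  pos_part : ∀ v, M.pairPlus (M.ord v) (abs (M.star v)) (abs v) + M.san (M.ord v) v ∈ C
  abs_smul_le : ∀ (a b : FMat), IsFin a → IsFin b → ∀ v,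
    (fnorm a : ℂ) • abs (M.rsmul (abs v) b) - abs (M.lsmul a (M.rsmul v b)) ∈ C
  indep_add : ∀ u v, M.FIndep u v → abs (u + v) = abs u + abs v
  absorb : ∀ u ∈ C, ∀ v ∈ C, ∀ w ∈ C, abs (u - v) = u + v → v - w ∈ C →
    abs (u - w) = u + w
  ortho_pm : ∀ u ∈ C, ∀ v ∈ C, ∀ w ∈ C, abs (u - v) = u + v → abs (u - w) = u + w →
    abs (u - abs (v + w)) = u + abs (v + w) ∧ abs (u - abs (v - w)) = u + abs (v - w)

/-- `eⁿ = Σ_{i<n} 𝔢_{i,0} 𝔢 𝔢_{0,i}` for an element `𝔢` of order `1`. -/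
def epow (e : V) (n : ℕ) : V :=
  ∑ i ∈ Finset.range n, M.lsmul (eUnit i 0) (M.rsmul e (eUnit 0 i))

/-- `𝔢` is a local order unit for `(𝔙, C)`. -/
def IsLocalOrderUnit (C : Set V) (e : V) : Prop :=
  e ∈ C ∧ M.cut 1 e = e ∧ ∀ v : V, M.cut 1 v = v → ∃ k : ℝ, 0 < k ∧
    M.pairPlus 1 ((k : ℂ) • e) ((k : ℂ) • e) + M.san 1 v ∈ C

/-- `(𝔙, C, 𝔢)` is a local `𝔉`-order unit bimodule. -/
def IsLocalUnitBimod (C : Set V) (e : V) : Prop :=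
  M.IsCone C ∧ ConeProper C ∧ M.ConeArch C ∧ M.IsLocalOrderUnit C e

/-- The norm associated to a local order unit:
`‖𝔳‖ = inf { k > 0 : (k𝔢^{o(𝔳)}, k𝔢^{o(𝔳)})⁺_{o(𝔳)} + sa_{o(𝔳)}(𝔳) ∈ C }`. -/
def lnorm (C : Set V) (e : V) (v : V) : ℝ :=
  sInf {k : ℝ | 0 < k ∧
    M.pairPlus (M.ord v) ((k : ℂ) • M.epow e (M.ord v)) ((k : ℂ) • M.epow e (M.ord v)) +
      M.san (M.ord v) v ∈ C}

/-- `𝔲 ⊥_∞ 𝔳` with respect to the local-order-unit norm. -/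
def PerpInf (C : Set V) (e : V) (u v : V) : Prop :=
  ∀ k₁ k₂ : ℝ, M.lnorm C e ((k₁ : ℂ) • u + (k₂ : ℂ) • v) =
    max (M.lnorm C e ((k₁ : ℂ) • u)) (M.lnorm C e ((k₂ : ℂ) • v))

end FBimod
/-! ### Matrices over a complex *-vector space -/

section MatrixLevel

variable {V : Type*} [AddCommGroup V] [Module ℂ V] [StarAddMonoid V] [StarModule ℂ V]

/-- Conjugate transpose of a rectangular matrix over a `*`-vector space. -/
def mstar {m n : ℕ} (v : Matrix (Fin m) (Fin n) V) : Matrix (Fin n) (Fin m) V :=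
  fun i j => star (v j i)

/-- Left action of a scalar matrix: `(a v)_{ij} = Σ_k a_{ik} v_{kj}`. -/
def aSmul {r m n : ℕ} (a : Matrix (Fin r) (Fin m) ℂ) (v : Matrix (Fin m) (Fin n) V) :
    Matrix (Fin r) (Fin n) V :=
  fun i j => ∑ k, a i k • v k j

/-- Right action of a scalar matrix: `(v b)_{ij} = Σ_k b_{kj} • v_{ik}`. -/
def smulB {m n s : ℕ} (v : Matrix (Fin m) (Fin n) V) (b : Matrix (Fin n) (Fin s) ℂ) :
    Matrix (Fin m) (Fin s) V :=
  fun i j => ∑ k, b k j • v i k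

/-- Direct sum (block diagonal) of rectangular matrices over `V`. -/
def dsum {m n r s : ℕ} (v : Matrix (Fin m) (Fin n) V) (w : Matrix (Fin r) (Fin s) V) :
    Matrix (Fin (m + r)) (Fin (n + s)) V :=
  fun i j =>
    if hi : (i : ℕ) < m then
      (if hj : (j : ℕ) < n then v ⟨i, hi⟩ ⟨j, hj⟩ else 0)
    else
      (if hj : (j : ℕ) < n then 0
       else w ⟨(i : ℕ) - m, by have := i.isLt; omega⟩ ⟨(j : ℕ) - n, by have := j.isLt; omega⟩)

end MatrixLevel

/-- The L2-operator norm of a rectangular complex scalar matrix. -/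
def cnorm {r m : ℕ} (a : Matrix (Fin r) (Fin m) ℂ) : ℝ := ‖a‖

/-- Embedding of a finite rectangular complex matrix into `𝔉`. -/
def embC {r m : ℕ} (a : Matrix (Fin r) (Fin m) ℂ) : FMat :=
  fun i j => if hi : i < r then (if hj : j < m then a ⟨i, hi⟩ ⟨j, hj⟩ else 0) else 0

/-- `e ⊕ ⋯ ⊕ e`: the diagonal matrix with constant diagonal `e`. -/
def diagE {V : Type*} [AddCommGroup V] (e : V) (n : ℕ) : Matrix (Fin n) (Fin n) V :=
  Matrix.of fun i j => if i = j then e else 0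

/-! ### Absolutely matrix ordered spaces and absolute matrix order unit spaces -/

/-- An absolutely matrix ordered space structure on a complex `*`-vector space `V`:
matrix cones `Mₙ(V)⁺` and absolute values `|·|_{m,n} : M_{m,n}(V) → Mₙ(V)⁺`
(Definition 4.1 of Karn-Kumar). -/
structure AMOS (V : Type*) [AddCommGroup V] [Module ℂ V] [StarAddMonoid V]
    [StarModule ℂ V] where
  pos : ∀ n : ℕ, Set (Matrix (Fin n) (Fin n) V)
  abs : ∀ m n : ℕ, Matrix (Fin m) (Fin n) V → Matrix (Fin n) (Fin n) V
  pos_star : ∀ n, ∀ v ∈ pos n, mstar v = v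
  pos_add : ∀ n, ∀ u ∈ pos n, ∀ v ∈ pos n, u + v ∈ pos n
  pos_conj : ∀ m n (a : Matrix (Fin n) (Fin m) ℂ), ∀ v ∈ pos n,
    aSmul a.conjTranspose (smulB v a) ∈ pos m
  abs_mem : ∀ m n v, abs m n v ∈ pos n
  abs_of_pos : ∀ n, ∀ v ∈ pos n, abs n n v = v
  abs_add_self : ∀ n (v : Matrix (Fin n) (Fin n) V), mstar v = v →
    abs n n v + v ∈ pos n ∧ abs n n v - v ∈ pos n
  abs_real_smul : ∀ n (k : ℝ) (v : Matrix (Fin n) (Fin n) V), mstar v = v →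
    abs n n ((k : ℂ) • v) = ((|k| : ℝ) : ℂ) • abs n n v
  absorb : ∀ n, ∀ u ∈ pos n, ∀ v ∈ pos n, ∀ w ∈ pos n,
    abs n n (u - v) = u + v → v - w ∈ pos n → abs n n (u - w) = u + w
  ortho_pm : ∀ n, ∀ u ∈ pos n, ∀ v ∈ pos n, ∀ w ∈ pos n,
    abs n n (u - v) = u + v → abs n n (u - w) = u + w →
    abs n n (u - abs n n (v + w)) = u + abs n n (v + w) ∧
      abs n n (u - abs n n (v - w)) = u + abs n n (v - w)
  abs_smul_le : ∀ (r m n s : ℕ) (α : Matrix (Fin r) (Fin m) ℂ)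
    (v : Matrix (Fin m) (Fin n) V) (β : Matrix (Fin n) (Fin s) ℂ),
    (cnorm α : ℂ) • abs n s (smulB (abs m n v) β) - abs r s (aSmul α (smulB v β)) ∈ pos s
  abs_dsum : ∀ (m n r s : ℕ) (v : Matrix (Fin m) (Fin n) V) (w : Matrix (Fin r) (Fin s) V),
    abs (m + r) (n + s) (dsum v w) = dsum (abs m n v) (abs r s w)

/-- A matrix order unit structure on top of an absolutely matrix ordered space:
an order unit `e` with `V⁺` proper and each `Mₙ(V)⁺` Archimedean. -/
structure AMOUS (V : Type*) [AddCommGroup V] [Module ℂ V] [StarAddMonoid V]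
    [StarModule ℂ V] extends AMOS V where
  e : V
  e_pos : diagE e 1 ∈ pos 1
  proper : ∀ v ∈ pos 1, -v ∈ pos 1 → v = 0
  arch : ∀ n (v : Matrix (Fin n) (Fin n) V), mstar v = v →
    (∀ k : ℝ, 0 < k → (k : ℂ) • diagE e n + v ∈ pos n) →
    v ∈ pos n
  unit : ∀ n (v : Matrix (Fin n) (Fin n) V), mstar v = v →
    ∃ k : ℝ, 0 < k ∧ (k : ℂ) • diagE e n - v ∈ pos n ∧
      (k : ℂ) • diagE e n + v ∈ pos n

namespace AMOUS

variable {V : Type*} [AddCommGroup V] [Module ℂ V] [StarAddMonoid V] [StarModule ℂ V]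
variable (A : AMOUS V)

/-- `eⁿ = e ⊕ ⋯ ⊕ e ∈ Mₙ(V)`. -/
def eN (n : ℕ) : Matrix (Fin n) (Fin n) V := diagE A.e n

/-- The `2n × 2n` matrix `[[a, b], [c, d]]` of `n × n` blocks. -/
def block2 {n : ℕ} (a b c d : Matrix (Fin n) (Fin n) V) :
    Matrix (Fin (n + n)) (Fin (n + n)) V :=
  fun i j =>
    if hi : (i : ℕ) < n then
      (if hj : (j : ℕ) < n then a ⟨i, hi⟩ ⟨j, hj⟩
       else b ⟨i, hi⟩ ⟨(j : ℕ) - n, by have := j.isLt; omega⟩)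
    else
      (if hj : (j : ℕ) < n then c ⟨(i : ℕ) - n, by have := i.isLt; omega⟩ ⟨j, hj⟩
       else d ⟨(i : ℕ) - n, by have := i.isLt; omega⟩ ⟨(j : ℕ) - n, by have := j.isLt; omega⟩)

end AMOUS
namespace AMOUS

variable {V : Type*} [AddCommGroup V] [Module ℂ V] [StarAddMonoid V] [StarModule ℂ V]
variable (A : AMOUS V)

/-- The matrix norms of a matrix order unit space:
`‖v‖ₙ = inf { k > 0 : [[k eⁿ, v], [v*, k eⁿ]] ∈ M₂ₙ(V)⁺ }`. -/
def mnorm (n : ℕ) (v : Matrix (Fin n) (Fin n) V) : ℝ :=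
  sInf {k : ℝ | 0 < k ∧
    block2 ((k : ℂ) • A.eN n) v (mstar v) ((k : ℂ) • A.eN n) ∈ A.pos (n + n)}

/-- Orthogonality `u ⊥ v` (for positive elements): `|u − v| = u + v`. -/
def Perp {n : ℕ} (u v : Matrix (Fin n) (Fin n) V) : Prop :=
  A.abs n n (u - v) = u + v

/-- `u ⊥_∞ v`: `‖k₁ u + k₂ v‖ = max {‖k₁ u‖, ‖k₂ v‖}` for all real `k₁, k₂`. -/
def PerpInfM {n : ℕ} (u v : Matrix (Fin n) (Fin n) V) : Prop :=
  ∀ k₁ k₂ : ℝ, A.mnorm n ((k₁ : ℂ) • u + (k₂ : ℂ) • v) =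
    max (A.mnorm n ((k₁ : ℂ) • u)) (A.mnorm n ((k₂ : ℂ) • v))

/-- `u ⊥_∞^a v`: absolute `∞`-orthogonality. -/
def PerpInfA {n : ℕ} (u v : Matrix (Fin n) (Fin n) V) : Prop :=
  ∀ u₁ ∈ A.pos n, ∀ v₁ ∈ A.pos n, u - u₁ ∈ A.pos n → v - v₁ ∈ A.pos n → A.PerpInfM u₁ v₁

/-- `(V, {Mₙ(V)⁺}, {|·|}, e)` is an absolute matrix order unit space:
`⊥ = ⊥_∞^a` on each `Mₙ(V)⁺`. -/
def IsAbsolute : Prop :=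
  ∀ n, ∀ u ∈ A.pos n, ∀ v ∈ A.pos n, (A.Perp u v ↔ A.PerpInfA u v)

/-- `p` is an order projection in `Mₙ(V)`: `p* = p` and `|2p − eⁿ| = eⁿ`. -/
def IsOP (n : ℕ) (p : Matrix (Fin n) (Fin n) V) : Prop :=
  mstar p = p ∧ A.abs n n ((2 : ℂ) • p - A.eN n) = A.eN n

/-- `v ∈ M_{m,n}(V)` is a partial isometry: `|v|` and `|v*|` are order projections. -/
def IsPI {m n : ℕ} (v : Matrix (Fin m) (Fin n) V) : Prop :=
  A.IsOP n (A.abs m n v) ∧ A.IsOP m (A.abs n m (mstar v))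

end AMOUS

/-- An element of `M_∞(V)`: a matrix at some level `n`. -/
def OPE (V : Type*) : Type _ := Σ n : ℕ, Matrix (Fin n) (Fin n) V

namespace OPE

variable {V : Type*} [AddCommGroup V] [Module ℂ V] [StarAddMonoid V] [StarModule ℂ V]

/-- Direct sum in `M_∞(V)`. -/
def d (p q : OPE V) : OPE V := ⟨p.1 + q.1, dsum p.2 q.2⟩

/-- The zero order projection (at level 1). -/
def zero (V : Type*) [AddCommGroup V] : OPE V := ⟨1, 0⟩

end OPE

namespace AMOUS

variable {V : Type*} [AddCommGroup V] [Module ℂ V] [StarAddMonoid V] [StarModule ℂ V]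
variable (A : AMOUS V)

/-- Membership in `𝒪𝒫_∞(V)`. -/
def IsOPE (p : OPE V) : Prop := A.IsOP p.1 p.2

/-- `eⁿ` as an element of `𝒪𝒫_∞(V)`. -/
def eOPE (n : ℕ) : OPE V := ⟨n, A.eN n⟩

/-- Partial isometric equivalence `p ∼ q` of order projections: there is a partial
isometry `v` with `p = |v*|` and `q = |v|`. -/
def Sim (p q : OPE V) : Prop :=
  ∃ v : Matrix (Fin p.1) (Fin q.1) V,
    A.IsPI v ∧ p.2 = A.abs q.1 p.1 (mstar v) ∧ q.2 = A.abs p.1 q.1 v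

/-- Condition (T). -/
def CondT : Prop :=
  ∀ (m n l : ℕ) (u : Matrix (Fin m) (Fin n) V) (v : Matrix (Fin l) (Fin n) V),
    A.IsPI u → A.IsPI v → A.abs m n u = A.abs l n v →
    ∃ w : Matrix (Fin m) (Fin l) V, A.IsPI w ∧
      A.abs l m (mstar w) = A.abs n m (mstar u) ∧ A.abs m l w = A.abs n l (mstar v)

/-- Stabilized equivalence `p ≈ q`: `p ⊕ r ∼ q ⊕ r` for some order projection `r`. -/
def ASim (p q : OPE V) : Prop := ∃ r : OPE V, A.IsOPE r ∧ A.Sim (p.d r) (q.d r)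

/-- A pair of order projections, representing an element `[(p,q)]` of `K₀(V)`. -/
def IsOPPair (x : OPE V × OPE V) : Prop := A.IsOPE x.1 ∧ A.IsOPE x.2

/-- The relation `(p₁,q₁) ≡ (p₂,q₂) ↔ p₁ ⊕ q₂ ≈ p₂ ⊕ q₁` defining `K₀(V)`. -/
def Krel (x y : OPE V × OPE V) : Prop := A.ASim (x.1.d y.2) (y.1.d x.2)

/-- Addition of representatives of `K₀(V)` classes. -/
def kadd (x y : OPE V × OPE V) : OPE V × OPE V := (x.1.d y.1, x.2.d y.2)

/-- The representative of the zero class of `K₀(V)`. -/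
def kzero : OPE V × OPE V := (OPE.zero V, OPE.zero V)

/-- Representative-level membership in the cone `K₀(V)⁺ = {[(p,0)] : p ∈ 𝒪𝒫_∞(V)}`. -/
def KPos (x : OPE V × OPE V) : Prop :=
  ∃ p : OPE V, A.IsOPE p ∧ A.Krel x (p, OPE.zero V)

/-- Representative-level order `[x] ≤ [y]` in `K₀(V)`: `[y] − [x] ∈ K₀(V)⁺`. -/
def Kle (x y : OPE V × OPE V) : Prop :=
  ∃ r : OPE V, A.IsOPE r ∧ A.Krel (kadd x (r, OPE.zero V)) y

/-- The order projection `p ∈ Mₙ(V)` is finite: `q ∼ p` and `q ≥ p` imply `q = p`. -/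
def FiniteOP (n : ℕ) (p : Matrix (Fin n) (Fin n) V) : Prop :=
  ∀ q : Matrix (Fin n) (Fin n) V, A.IsOP n q → A.Sim ⟨n, q⟩ ⟨n, p⟩ →
    q - p ∈ A.pos n → q = p

end AMOUS

/-! ### Maps between absolute matrix order unit spaces -/

section Maps

variable {V W : Type*} [AddCommGroup V] [Module ℂ V] [StarAddMonoid V] [StarModule ℂ V]
  [AddCommGroup W] [Module ℂ W] [StarAddMonoid W] [StarModule ℂ W]

/-- The amplification `φₙ` (entrywise application) of a map. -/
def mmap (φ : V →ₗ[ℂ] W) {m n : ℕ} (v : Matrix (Fin m) (Fin n) V) :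
    Matrix (Fin m) (Fin n) W :=
  fun i j => φ (v i j)

/-- `φ` is completely `|·|`-preserving: every amplification `φₙ` is `|·|`-preserving. -/
def CAbsPres (A : AMOUS V) (B : AMOUS W) (φ : V →ₗ[ℂ] W) : Prop :=
  ∀ (n : ℕ) (v : Matrix (Fin n) (Fin n) V), B.abs n n (mmap φ v) = mmap φ (A.abs n n v)

/-- `φ` and `ψ` are completely orthogonal: `φₙ(u) ⊥ ψₙ(v)` for all positive `u, v`. -/
def COrth (A : AMOUS V) (B : AMOUS W) (φ ψ : V →ₗ[ℂ] W) : Prop :=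
  ∀ (n : ℕ) (u v : Matrix (Fin n) (Fin n) V), u ∈ A.pos n → v ∈ A.pos n →
    B.Perp (mmap φ u) (mmap ψ v)

/-- The image of an element of `M_∞(V)` under (the amplifications of) `φ`. -/
def mmapOPE (φ : V →ₗ[ℂ] W) (p : OPE V) : OPE W := ⟨p.1, mmap φ p.2⟩

/-- `F` represents a group homomorphism `K₀(V) → K₀(W)` making the `K₀` diagram of `φ`
commute: it maps `K₀`-representatives to `K₀`-representatives, respects the defining
relation `≡`, is additive, and satisfies `F([(p, 0)]) = [(φ(p), 0)]`. -/
def K0HomProp (A : AMOUS V) (B : AMOUS W) (φ : V →ₗ[ℂ] W)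
    (F : OPE V × OPE V → OPE W × OPE W) : Prop :=
  (∀ x, A.IsOPPair x → B.IsOPPair (F x)) ∧
  (∀ x y, A.IsOPPair x → A.IsOPPair y → A.Krel x y → B.Krel (F x) (F y)) ∧
  (∀ x y, A.IsOPPair x → A.IsOPPair y → B.Krel (F (AMOUS.kadd x y)) (AMOUS.kadd (F x) (F y))) ∧
  (∀ p : OPE V, A.IsOPE p → B.Krel (F (p, OPE.zero V)) (mmapOPE φ p, OPE.zero W))

/-- The completely bounded norm of `φ` with respect to the order unit matrix norms. -/
def cbNorm (A : AMOUS V) (B : AMOUS W) (φ : V →ₗ[ℂ] W) : ℝ :=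
  ⨆ n : ℕ, sInf {c : ℝ | 0 ≤ c ∧
    ∀ v : Matrix (Fin n) (Fin n) V, B.mnorm n (mmap φ v) ≤ c * A.mnorm n v}

end Maps



/-! ### Auxiliary lemmas for Statement 18 -/

section Aux18
set_option linter.unusedSectionVars false

variable {V : Type*} [AddCommGroup V] [Module ℂ V] [StarAddMonoid V] [StarModule ℂ V]

theorem sum_two18 {n : ℕ} (p q : Fin n) (hpq : p ≠ q)
    (x y : ℂ) (f : Fin n → V) :
    ∑ k, (if k = p then x else if k = q then y else 0) • f k = x • f p + y • f q := by
  have h : ∀ k, (if k = p then x else if k = q then y else 0) • f k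
      = (if k = p then x • f k else 0) + (if k = q then y • f k else 0) := by
    intro k
    by_cases h1 : k = p
    · subst h1; rw [if_pos rfl, if_pos rfl, if_neg hpq, add_zero]
    · by_cases h2 : k = q
      · subst h2; rw [if_neg h1, if_pos rfl, if_neg h1, if_pos rfl, zero_add]
      · rw [if_neg h1, if_neg h2, if_neg h1, if_neg h2, zero_smul, add_zero]
  simp only [h, Finset.sum_add_distrib, Finset.sum_ite_eq', Finset.mem_univ, if_true]

theorem sum_one18 {n : ℕ} (p : Fin n) (x : ℂ) (f : Fin n → V) :
    ∑ k, (if k = p then x else 0) • f k = x • f p := by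
  have h : ∀ k, (if k = p then x else 0) • f k = (if k = p then x • f k else 0) := by
    intro k; by_cases h1 : k = p <;> simp [h1]
  simp only [h, Finset.sum_ite_eq', Finset.mem_univ, if_true]

theorem sum_two_two18 {n : ℕ} (i j : Fin n) (hij : i ≠ j) (x y : ℂ)
    (w : Fin n → Fin n → V) :
    ∑ p, (star (if p = i then x else if p = j then y else 0)) •
        ∑ k, (if k = i then x else if k = j then y else 0) • w p k
      = star x • (x • w i i + y • w i j) + star y • (x • w j i + y • w j j) := by
  have inner : ∀ p, ∑ k, (if k = i then x else if k = j then y else 0) • w p k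
      = x • w p i + y • w p j := fun p => sum_two18 i j hij x y (w p)
  have star_ite : ∀ p : Fin n, star (if p = i then x else if p = j then y else 0)
      = (if p = i then star x else if p = j then star y else 0) := by
    intro p; split_ifs <;> simp
  simp only [inner, star_ite]
  exact sum_two18 i j hij (star x) (star y) _

/-- Antisymmetry of the matrix cones. -/
theorem pos_antisymm18 (A : AMOUS V) {n : ℕ} (w : Matrix (Fin n) (Fin n) V)
    (hw : w ∈ A.pos n) (hw' : -w ∈ A.pos n) : w = 0 := by
  have key : ∀ c : Fin n → ℂ,
      ∑ i, (star (c i)) • ∑ k, (c k) • w i k = 0 := by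
    intro c
    set a : Matrix (Fin n) (Fin 1) ℂ := fun k _ => c k with ha
    have h1 := A.pos_conj 1 n a w hw
    have h2 := A.pos_conj 1 n a (-w) hw'
    have hneg : aSmul a.conjTranspose (smulB (-w) a)
        = -(aSmul a.conjTranspose (smulB w a)) := by
      funext i j
      simp [aSmul, smulB, Matrix.neg_apply, smul_neg, Finset.smul_sum, ← Finset.sum_neg_distrib]
    rw [hneg] at h2
    have h0 : aSmul a.conjTranspose (smulB w a) = 0 := A.proper _ h1 h2
    have h00 := congrFun (congrFun h0 0) 0
    simpa [aSmul, smulB, Matrix.conjTranspose_apply, Matrix.conjTranspose, Matrix.transpose, ha] using h00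
  have hdiag : ∀ p, w p p = 0 := by
    intro p
    have h := key (fun i => if i = p then (1:ℂ) else 0)
    simp only [sum_one18, apply_ite (star : ℂ → ℂ), star_one, star_zero, one_smul] at h
    exact h
  funext i j
  by_cases hij : i = j
  · subst hij; exact hdiag i
  · show w i j = 0
    have h1 : (star (1:ℂ)) • ((1:ℂ) • w i i + (1:ℂ) • w i j)
        + star (1:ℂ) • ((1:ℂ) • w j i + (1:ℂ) • w j j) = 0 := by
      rw [← sum_two_two18 i j hij 1 1 (fun p k => w p k)]
      exact key _
    have h2 : (star (1:ℂ)) • ((1:ℂ) • w i i + Complex.I • w i j)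
        + star Complex.I • ((1:ℂ) • w j i + Complex.I • w j j) = 0 := by
      rw [← sum_two_two18 i j hij 1 Complex.I (fun p k => w p k)]
      exact key _
    simp only [star_one, one_smul, hdiag, add_zero, zero_add, smul_add, smul_smul,
      Complex.star_def, Complex.conj_I, smul_zero, neg_smul] at h1 h2
    -- h1 : w i j + w j i = 0
    -- h2 : I • w i j + -(I • w j i) = 0
    have hI : Complex.I • w i j - Complex.I • w j i = 0 := by
      rw [sub_eq_add_neg]
      rw [one_mul] at h2
      exact h2
    have heq : w i j = w j i := by
      have h3 : Complex.I • (w i j - w j i) = 0 := by rw [smul_sub]; exact hI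
      have h4 := congrArg (fun z => (-Complex.I) • z) h3
      simp only [smul_smul, neg_mul, Complex.I_mul_I, neg_neg, one_smul, smul_zero] at h4
      exact sub_eq_zero.mp h4
    have h5 : (2:ℂ) • w i j = 0 := by
      rw [two_smul]
      nth_rewrite 2 [heq]
      exact h1
    have h6 := congrArg (fun z => ((2:ℂ)⁻¹) • z) h5
    simpa [smul_smul] using h6

def flv (n i : ℕ) : ℕ := if i < n then i + n else i - n

def swapM (n : ℕ) : Matrix (Fin (n+n)) (Fin (n+n)) ℂ :=
  fun i j => if (i:ℕ) = (j:ℕ) + n ∨ (j:ℕ) = (i:ℕ) + n then 1 else 0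

theorem swapM_apply {n : ℕ} (i j : Fin (n+n)) :
    swapM n i j = if (j:ℕ) = flv n (i:ℕ) then 1 else 0 := by
  have hi := i.isLt; have hj := j.isLt
  unfold swapM flv
  split_ifs <;> first | rfl | (exfalso; omega)

theorem swapM_conjTranspose (n : ℕ) : (swapM n).conjTranspose = swapM n := by
  funext i j
  simp only [Matrix.conjTranspose_apply, swapM, or_comm, apply_ite (star : ℂ → ℂ),
    star_one, star_zero]

theorem swapM_mul_self {n : ℕ} : swapM n * swapM n = 1 := by
  funext i j
  have hi := i.isLt; have hj := j.isLt
  have hk : flv n (i:ℕ) < n + n := by unfold flv; split_ifs <;> omega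
  rw [Matrix.mul_apply]
  have hrow : ∀ k : Fin (n+n), swapM n i k = if k = (⟨flv n (i:ℕ), hk⟩ : Fin (n+n)) then 1 else 0 := by
    intro k; rw [swapM_apply]; congr 1; rw [Fin.ext_iff]
  simp only [hrow, ite_mul, one_mul, zero_mul, Finset.sum_ite_eq', Finset.mem_univ, if_true]
  rw [swapM_apply, Matrix.one_apply]
  have hfl : flv n (flv n (i:ℕ)) = (i:ℕ) := by unfold flv; split_ifs <;> omega
  by_cases h : i = j
  · subst h; rw [if_pos (by rw [hfl]), if_pos rfl]
  · rw [if_neg (by rw [hfl]; exact fun hc => h (Fin.ext hc.symm)), if_neg h]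

theorem swapM_norm {n : ℕ} (hn : 0 < n) : cnorm (swapM n) = 1 := by
  haveI : Nonempty (Fin (n+n)) := ⟨⟨0, by omega⟩⟩
  have hstar : star (swapM n) = swapM n := by
    rw [Matrix.star_eq_conjTranspose, swapM_conjTranspose]
  have hu : swapM n ∈ unitary (Matrix (Fin (n+n)) (Fin (n+n)) ℂ) := by
    rw [Unitary.mem_iff, hstar]
    exact ⟨swapM_mul_self, swapM_mul_self⟩
  exact CStarRing.norm_coe_unitary (⟨swapM n, hu⟩ : unitary (Matrix (Fin (n+n)) (Fin (n+n)) ℂ))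

theorem aSmul_aSmul {r m k n : ℕ} (a : Matrix (Fin r) (Fin m) ℂ)
    (b : Matrix (Fin m) (Fin k) ℂ) (w : Matrix (Fin k) (Fin n) V) :
    aSmul a (aSmul b w) = aSmul (a * b) w := by
  funext i j
  simp only [aSmul, Matrix.mul_apply, Finset.smul_sum, smul_smul, Finset.sum_smul]
  exact Finset.sum_comm

theorem aSmul_one {m n : ℕ} (w : Matrix (Fin m) (Fin n) V) :
    aSmul (1 : Matrix (Fin m) (Fin m) ℂ) w = w := by
  funext i j
  simp [aSmul, Matrix.one_apply, ite_smul, Finset.sum_ite_eq]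

theorem smulB_one {m n : ℕ} (w : Matrix (Fin m) (Fin n) V) :
    smulB w (1 : Matrix (Fin n) (Fin n) ℂ) = w := by
  funext i j
  simp [smulB, Matrix.one_apply, ite_smul, Finset.sum_ite_eq']

/-- `abs` is invariant under an isometric left action. -/
theorem abs_unitary18 (A : AMOUS V) {m k : ℕ} (α : Matrix (Fin m) (Fin m) ℂ)
    (hmul : α * α = 1) (hnorm : cnorm α = 1) (w : Matrix (Fin m) (Fin k) V) :
    A.abs m k (aSmul α w) = A.abs m k w := by
  have step : ∀ u : Matrix (Fin m) (Fin k) V,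
      A.abs m k u - A.abs m k (aSmul α u) ∈ A.pos k := by
    intro u
    have h := A.abs_smul_le m m k k α u 1
    rwa [smulB_one, smulB_one, A.abs_of_pos k _ (A.abs_mem m k u), hnorm,
      Complex.ofReal_one, one_smul] at h
  have h1 := step w
  have h2 := step (aSmul α w)
  rw [aSmul_aSmul, hmul, aSmul_one] at h2
  have h3 : -(A.abs m k w - A.abs m k (aSmul α w)) ∈ A.pos k := by
    rw [neg_sub]; exact h2
  have := pos_antisymm18 A _ h1 h3
  rw [sub_eq_zero] at this
  exact this.symm

theorem block2_eq_aSmul {n : ℕ} (v : Matrix (Fin n) (Fin n) V) :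
    AMOUS.block2 (0 : Matrix (Fin n) (Fin n) V) v (mstar v) 0
      = aSmul (swapM n) (dsum (mstar v) v) := by
  funext i j
  have hi := i.isLt; have hj := j.isLt
  have hk : flv n (i:ℕ) < n + n := by unfold flv; split_ifs <;> omega
  have hrow : ∀ k : Fin (n+n), swapM n i k = if k = (⟨flv n (i:ℕ), hk⟩ : Fin (n+n)) then 1 else 0 := by
    intro k; rw [swapM_apply]; congr 1; rw [Fin.ext_iff]
  show _ = ∑ k, swapM n i k • dsum (mstar v) v k j
  simp only [hrow, ite_smul, one_smul, zero_smul, Finset.sum_ite_eq', Finset.mem_univ, if_true]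
  by_cases h1 : (i:ℕ) < n
  · have e1 : (⟨flv n (i:ℕ), hk⟩ : Fin (n+n)) = ⟨(i:ℕ) + n, by omega⟩ :=
      Fin.ext (by simp [flv, h1])
    rw [e1]
    unfold AMOUS.block2 dsum
    rw [dif_pos h1, dif_neg (show ¬((i:ℕ) + n < n) by omega)]
    by_cases h2 : (j:ℕ) < n
    · rw [dif_pos h2, dif_pos h2]; simp
    · rw [dif_neg h2, dif_neg h2]
      congr 1 <;> exact Fin.ext (by simp)
  · have e1 : (⟨flv n (i:ℕ), hk⟩ : Fin (n+n)) = ⟨(i:ℕ) - n, by omega⟩ :=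
      Fin.ext (by simp [flv, h1])
    rw [e1]
    unfold AMOUS.block2 dsum
    rw [dif_neg h1, dif_pos (show ((i:ℕ) - n) < n by omega)]
    by_cases h2 : (j:ℕ) < n
    · rw [dif_pos h2, dif_pos h2]
    · rw [dif_neg h2, dif_neg h2]; simp

/-- Key identity: `|[0 v; v* 0]| = |v*| ⊕ |v|`. -/
theorem abs_offdiag18 (A : AMOUS V) {n : ℕ} (v : Matrix (Fin n) (Fin n) V) :
    A.abs (n+n) (n+n) (AMOUS.block2 (0 : Matrix (Fin n) (Fin n) V) v (mstar v) 0)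
      = dsum (A.abs n n (mstar v)) (A.abs n n v) := by
  rcases Nat.eq_zero_or_pos n with h0 | hn
  · subst h0; funext i j; exact absurd i.isLt (by omega)
  · rw [block2_eq_aSmul, abs_unitary18 A _ swapM_mul_self (swapM_norm hn), A.abs_dsum]

theorem pos_real_smul18 (A : AMOUS V) {n : ℕ} {k : ℝ} (hk : 0 ≤ k)
    {w : Matrix (Fin n) (Fin n) V} (hw : w ∈ A.pos n) : ((k:ℝ):ℂ) • w ∈ A.pos n := by
  have h := A.abs_mem n n (((k:ℝ):ℂ) • w)
  rwa [A.abs_real_smul n k w (A.pos_star n w hw), A.abs_of_pos n w hw,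
    abs_of_nonneg hk] at h

theorem mstar_sub18 {m n : ℕ} (u v : Matrix (Fin m) (Fin n) V) :
    mstar (u - v) = mstar u - mstar v := by
  funext i j; simp [mstar, Matrix.sub_apply, star_sub]

theorem perp_symm18 (A : AMOUS V) {n : ℕ} {u v : Matrix (Fin n) (Fin n) V}
    (hu : u ∈ A.pos n) (hv : v ∈ A.pos n) (h : A.Perp u v) : A.Perp v u := by
  unfold AMOUS.Perp at h ⊢
  have hsa : mstar (u - v) = u - v := by
    rw [mstar_sub18, A.pos_star n u hu, A.pos_star n v hv]
  have h2 := A.abs_real_smul n (-1) (u - v) hsa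
  rw [show (((-1:ℝ)):ℂ) • (u - v) = v - u by push_cast; module,
    abs_of_nonpos (by norm_num : (-1:ℝ) ≤ 0)] at h2
  rw [h2, h]
  push_cast
  module

theorem perp_add18 (A : AMOUS V) {n : ℕ} {u v w : Matrix (Fin n) (Fin n) V}
    (hu : u ∈ A.pos n) (hv : v ∈ A.pos n) (hw : w ∈ A.pos n)
    (huv : A.Perp u v) (huw : A.Perp u w) : A.Perp u (v + w) := by
  have h := (A.ortho_pm n u hu v hv w hw huv huw).1
  rwa [A.abs_of_pos n (v + w) (A.pos_add n v hv w hw)] at h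

end Aux18

section Aux18b
set_option linter.unusedSectionVars false

variable {V W : Type*} [AddCommGroup V] [Module ℂ V] [StarAddMonoid V] [StarModule ℂ V]
  [AddCommGroup W] [Module ℂ W] [StarAddMonoid W] [StarModule ℂ W]

theorem mmap_sub18 (φ : V →ₗ[ℂ] W) {m n : ℕ} (u v : Matrix (Fin m) (Fin n) V) :
    mmap φ (u - v) = mmap φ u - mmap φ v := by
  funext i j; simp [mmap, Matrix.sub_apply]

theorem mmap_add18 (φ : V →ₗ[ℂ] W) {m n : ℕ} (u v : Matrix (Fin m) (Fin n) V) :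
    mmap φ (u + v) = mmap φ u + mmap φ v := by
  funext i j; simp [mmap, Matrix.add_apply]

theorem mmap_addmap18 (φ ψ : V →ₗ[ℂ] W) {m n : ℕ} (v : Matrix (Fin m) (Fin n) V) :
    mmap (φ + ψ) v = mmap φ v + mmap ψ v := by
  funext i j; simp [mmap, Matrix.add_apply]

theorem mmap_mstar18 (φ : V →ₗ[ℂ] W) (hφstar : ∀ v : V, φ (star v) = star (φ v))
    {m n : ℕ} (v : Matrix (Fin m) (Fin n) V) :
    mmap φ (mstar v) = mstar (mmap φ v) := by
  funext i j; simp [mmap, mstar, hφstar]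

theorem mmap_dsum18 (φ : V →ₗ[ℂ] W) {m n r s : ℕ} (u : Matrix (Fin m) (Fin n) V)
    (w : Matrix (Fin r) (Fin s) V) :
    mmap φ (dsum u w) = dsum (mmap φ u) (mmap φ w) := by
  funext i j
  simp only [mmap, dsum]
  split_ifs <;> simp

theorem mmap_block218 (φ : V →ₗ[ℂ] W) {n : ℕ} (u w : Matrix (Fin n) (Fin n) V) :
    mmap φ (AMOUS.block2 (0 : Matrix (Fin n) (Fin n) V) u w 0)
      = AMOUS.block2 (0 : Matrix (Fin n) (Fin n) W) (mmap φ u) (mmap φ w) 0 := by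
  funext i j
  simp only [mmap, AMOUS.block2]
  split_ifs <;> simp [mmap]

theorem mmap_pos18 (A : AMOUS V) (B : AMOUS W) (φ : V →ₗ[ℂ] W) (hφ : CAbsPres A B φ)
    {n : ℕ} {u : Matrix (Fin n) (Fin n) V} (hu : u ∈ A.pos n) : mmap φ u ∈ B.pos n := by
  have h := B.abs_mem n n (mmap φ u)
  rwa [hφ n u, A.abs_of_pos n u hu] at h

/-- The self-adjoint case of Statement 18. -/
theorem statement18_sa {V W : Type*} [AddCommGroup V] [Module ℂ V] [StarAddMonoid V]
    [StarModule ℂ V] [AddCommGroup W] [Module ℂ W] [StarAddMonoid W] [StarModule ℂ W]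
    (A : AMOUS V) (B : AMOUS W) (φ ψ : V →ₗ[ℂ] W)
    (hφ : CAbsPres A B φ) (hψ : CAbsPres A B ψ) (horth : COrth A B φ ψ)
    (m : ℕ) (v : Matrix (Fin m) (Fin m) V) (hv : mstar v = v) :
    B.abs m m (mmap (φ + ψ) v) = mmap (φ + ψ) (A.abs m m v) := by
  set vp : Matrix (Fin m) (Fin m) V := (((1/2 : ℝ)):ℂ) • (A.abs m m v + v) with hvpdef
  set vm : Matrix (Fin m) (Fin m) V := (((1/2 : ℝ)):ℂ) • (A.abs m m v - v) with hvmdef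
  have habs := A.abs_add_self m v hv
  have hvp : vp ∈ A.pos m := pos_real_smul18 A (by norm_num) habs.1
  have hvm : vm ∈ A.pos m := pos_real_smul18 A (by norm_num) habs.2
  have hsum : vp + vm = A.abs m m v := by
    rw [hvpdef, hvmdef]; push_cast; module
  have hdiff : vp - vm = v := by
    rw [hvpdef, hvmdef]; push_cast; module
  set a := mmap φ vp with hadef
  set b := mmap ψ vp with hbdef
  set c := mmap φ vm with hcdef
  set d := mmap ψ vm with hddef
  have ha : a ∈ B.pos m := mmap_pos18 A B φ hφ hvp
  have hb : b ∈ B.pos m := mmap_pos18 A B ψ hψ hvp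
  have hc : c ∈ B.pos m := mmap_pos18 A B φ hφ hvm
  have hd : d ∈ B.pos m := mmap_pos18 A B ψ hψ hvm
  have hac : B.Perp a c := by
    show B.abs m m (a - c) = a + c
    rw [hadef, hcdef, ← mmap_sub18, hdiff, hφ m v, ← hsum, mmap_add18]
  have hbd : B.Perp b d := by
    show B.abs m m (b - d) = b + d
    rw [hbdef, hddef, ← mmap_sub18, hdiff, hψ m v, ← hsum, mmap_add18]
  have had : B.Perp a d := horth m vp vm hvp hvm
  have hcb : B.Perp c b := horth m vm vp hvm hvp
  have hbc : B.Perp b c := perp_symm18 B hc hb hcb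
  have hcd_pos : c + d ∈ B.pos m := B.pos_add m c hc d hd
  have pa : B.Perp a (c + d) := perp_add18 B ha hc hd hac had
  have pb : B.Perp b (c + d) := perp_add18 B hb hc hd hbc hbd
  have pcda : B.Perp (c + d) a := perp_symm18 B ha hcd_pos pa
  have pcdb : B.Perp (c + d) b := perp_symm18 B hb hcd_pos pb
  have psum : B.Perp (c + d) (a + b) := perp_add18 B hcd_pos ha hb pcda pcdb
  have final : B.Perp (a + b) (c + d) :=
    perp_symm18 B hcd_pos (B.pos_add m a ha b hb) psum
  have e1 : mmap (φ + ψ) v = (a + b) - (c + d) := by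
    rw [← hdiff, mmap_addmap18, hadef, hbdef, hcdef, hddef, mmap_sub18, mmap_sub18]
    abel
  have e2 : mmap (φ + ψ) (A.abs m m v) = (a + b) + (c + d) := by
    rw [← hsum, mmap_addmap18, hadef, hbdef, hcdef, hddef, mmap_add18, mmap_add18]
    abel
  rw [e1, e2]
  exact final

theorem mstar_block218 {n : ℕ} (v : Matrix (Fin n) (Fin n) V) :
    mstar (AMOUS.block2 (0 : Matrix (Fin n) (Fin n) V) v (mstar v) 0)
      = AMOUS.block2 (0 : Matrix (Fin n) (Fin n) V) v (mstar v) 0 := by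
  funext i j
  simp only [mstar, AMOUS.block2]
  split_ifs <;> simp [mstar]

theorem dsum_apply_right18 {m n r s : ℕ} (x : Matrix (Fin m) (Fin n) V)
    (y : Matrix (Fin r) (Fin s) V) (i : Fin r) (j : Fin s) :
    dsum x y ⟨m + (i:ℕ), by omega⟩ ⟨n + (j:ℕ), by omega⟩ = y i j := by
  unfold dsum
  rw [dif_neg (by simp), dif_neg (by simp)]
  congr 1 <;> exact Fin.ext (by simp)

end Aux18b

/-- The sum of two completely orthogonal completely `|·|`-preserving
maps is completely `|·|`-preserving. -/
theorem statement18 {V W : Type*} [AddCommGroup V] [Module ℂ V] [StarAddMonoid V] [StarModule ℂ V]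
    [AddCommGroup W] [Module ℂ W] [StarAddMonoid W] [StarModule ℂ W] (A : AMOUS V) (B : AMOUS W)
    (hAabs : A.IsAbsolute) (hBabs : B.IsAbsolute)
    (φ ψ : V →ₗ[ℂ] W)
    (hφstar : ∀ v : V, φ (star v) = star (φ v))
    (hψstar : ∀ v : V, ψ (star v) = star (ψ v))
    (hφ : CAbsPres A B φ) (hψ : CAbsPres A B ψ) (horth : COrth A B φ ψ) :
    CAbsPres A B (φ + ψ) := by
  intro n v
  set t := AMOUS.block2 (0 : Matrix (Fin n) (Fin n) V) v (mstar v) 0 with htdef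
  have hts : mstar t = t := mstar_block218 v
  have hsum_star : ∀ x : V, (φ + ψ) (star x) = star ((φ + ψ) x) := by
    intro x; simp [hφstar, hψstar]
  have hsa := statement18_sa A B φ ψ hφ hψ horth (n+n) t hts
  set w := mmap (φ + ψ) v with hwdef
  have hmt : mmap (φ + ψ) t
      = AMOUS.block2 (0 : Matrix (Fin n) (Fin n) W) w (mstar w) 0 := by
    rw [htdef, mmap_block218, mmap_mstar18 (φ + ψ) hsum_star]
  have hAt : A.abs (n+n) (n+n) t = dsum (A.abs n n (mstar v)) (A.abs n n v) :=
    abs_offdiag18 A v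
  rw [hmt, abs_offdiag18 B w, hAt, mmap_dsum18] at hsa
  funext i j
  have h := congrFun (congrFun hsa ⟨n + (i:ℕ), by omega⟩) ⟨n + (j:ℕ), by omega⟩
  rw [dsum_apply_right18, dsum_apply_right18] at h
  exact h
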